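/- Let (E₀,...,Eₙ) be an n-decomposition of a pseudo-effect algebra E. Then E₀ is a normal ideal of E. Moreover E₀ = Ker(s), where s is the associated (n+1)-valued discrete state. -/

import Mathlib

/-- A pseudo-effect algebra (PEA): a structure with a partial addition `add`
(with domain of definition `D`), a zero and a one, satisfying (PE1)-(PE4)
together with the (derivable) neutrality of zero. -/
structure PEA (E : Type) where
  /-- `D a b` means that the partial sum `a + b` is defined. -/
  D : E → E → Prop
  /-- The partial addition (its value is relevant only when `D a b` holds). -/
  add : E → E → E
  zero : E
  one : E
  /-- (PE1), definedness part. -/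
  assoc_defined : ∀ a b c, (D a b ∧ D (add a b) c) ↔ (D b c ∧ D a (add b c))
  /-- (PE1), equality part. -/
  assoc_eq : ∀ a b c, D a b → D (add a b) c → add (add a b) c = add a (add b c)
  /-- (PE2), right complement. -/
  compl_right : ∀ a, ∃! d, D a d ∧ add a d = one
  /-- (PE2), left complement. -/
  compl_left : ∀ a, ∃! e, D e a ∧ add e a = one
  /-- (PE3). -/
  pe3 : ∀ a b, D a b →
    (∃ d, D d a ∧ add d a = add a b) ∧ (∃ e, D b e ∧ add b e = add a b)
  /-- (PE4). -/
  pe4_right : ∀ a, D a one → a = zero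
  pe4_left : ∀ a, D one a → a = zero
  D_zero_right : ∀ a, D a zero
  D_zero_left : ∀ a, D zero a
  add_zero : ∀ a, add a zero = a
  zero_add : ∀ a, add zero a = a

namespace PEA

variable {E : Type} (P : PEA E)

/-- The induced partial order: `a ≤ b` iff `a + c = b` for some `c`. -/
def le (a b : E) : Prop := ∃ c, P.D a c ∧ P.add a c = b

/-- The left complement `a⁻`, the unique element with `a⁻ + a = 1`. -/
noncomputable def lneg (a : E) : E := (P.compl_left a).choose

/-- The right complement `a~`, the unique element with `a + a~ = 1`. -/
noncomputable def rneg (a : E) : E := (P.compl_right a).choose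

/-- `E` is weakly commutative if `a + b` is defined iff `b + a` is defined. -/
def WeaklyCommutative : Prop := ∀ a b, P.D a b ↔ P.D b a

/-- `E` is symmetric if the two complements coincide. -/
def Symmetric : Prop := ∀ a, P.lneg a = P.rneg a

/-- A state on a PEA: a `[0,1]`-valued map, additive on existing sums, sending
`0 ↦ 0` and `1 ↦ 1`. -/
def IsState (s : E → ℝ) : Prop :=
  s P.zero = 0 ∧ s P.one = 1 ∧ (∀ a, 0 ≤ s a ∧ s a ≤ 1) ∧
    ∀ a b, P.D a b → s (P.add a b) = s a + s b

/-- An `(n+1)`-valued discrete state: a state whose range is `{0, 1/n, …, 1}`. -/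
def IsDiscreteState (n : ℕ) (s : E → ℝ) : Prop :=
  P.IsState s ∧ Set.range s = {x : ℝ | ∃ i ≤ n, x = (i : ℝ) / n}

/-- An ideal: a nonempty downward closed subset closed under existing sums. -/
def IsIdeal (I : Set E) : Prop :=
  I.Nonempty ∧ (∀ a i, i ∈ I → P.le a i → a ∈ I) ∧
    ∀ i j, i ∈ I → j ∈ I → P.D i j → P.add i j ∈ I

/-- A normal ideal: `a + i = j + a` implies `i ∈ I ↔ j ∈ I`. -/
def IsNormalIdeal (I : Set E) : Prop :=
  P.IsIdeal I ∧ ∀ a i j, P.D a i → P.D j a → P.add a i = P.add j a → (i ∈ I ↔ j ∈ I)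

/-- A maximal ideal: proper and not properly contained in a proper ideal. -/
def IsMaximalIdeal (I : Set E) : Prop :=
  P.IsIdeal I ∧ P.one ∉ I ∧ ∀ J, P.IsIdeal J → P.one ∉ J → I ⊆ J → I = J

/-- `n`-fold partial multiple of an element. -/
def nmul : ℕ → E → E
  | 0, _ => P.zero
  | k + 1, a => P.add (nmul k a) a

/-- Definedness of the `n`-fold partial multiple. -/
def nmulD : ℕ → E → Prop
  | 0, _ => True
  | k + 1, a => nmulD k a ∧ P.D (P.nmul k a) a

/-- The set of elements of infinite isotropic index. -/
def Infinit : Set E := {a | ∀ k, P.nmulD k a}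

/-- An `n`-decomposition of a PEA. -/
def IsNDecomp (n : ℕ) (F : ℕ → Set E) : Prop :=
  (∀ i, i ≤ n → (F i).Nonempty) ∧
  (∀ i j, i ≤ n → j ≤ n → i ≠ j → F i ∩ F j = ∅) ∧
  ((⋃ i ∈ Set.Iic n, F i) = Set.univ) ∧
  (∀ i, i ≤ n → P.lneg '' F i = F (n - i) ∧ P.rneg '' F i = F (n - i)) ∧
  (∀ i j, i ≤ n → j ≤ n → ∀ x ∈ F i, ∀ y ∈ F j, P.D x y →
     i + j ≤ n ∧ P.add x y ∈ F (i + j))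

/-- An `n`-perfect PEA: an `n`-decomposition with all sums `Eᵢ + Eⱼ`, `i+j < n`,
existing, and whose bottom slice is the unique maximal ideal. -/
def IsNPerfect (n : ℕ) (F : ℕ → Set E) : Prop :=
  P.IsNDecomp n F ∧
  (∀ i j, i + j < n → ∀ x ∈ F i, ∀ y ∈ F j, P.D x y) ∧
  (P.IsMaximalIdeal (F 0) ∧ ∀ J, P.IsMaximalIdeal J → J = F 0)

end PEA

/-- the bottom slice `E₀` of an `n`-decomposition is a normal
ideal; moreover `E₀ = Ker(s)` for the associated `(n+1)`-valued discrete
state. -/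
theorem stmt8 {E : Type} (P : PEA E) (n : ℕ) (hn : 1 ≤ n) (F : ℕ → Set E)
    (hF : P.IsNDecomp n F) :
    P.IsNormalIdeal (F 0) ∧
      ∀ s : E → ℝ, P.IsDiscreteState n s →
        (∀ i ≤ n, ∀ x ∈ F i, s x = (i : ℝ) / n) →
        F 0 = {x : E | s x = 0} := by
  obtain ⟨hne, hdisj, hcov, hneg, hadd⟩ := hF
  have hgrade : ∀ x : E, ∃ i ≤ n, x ∈ F i := by
    intro x
    have hx : x ∈ ⋃ i ∈ Set.Iic n, F i := by rw [hcov]; trivial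
    simpa using hx
  have huniq : ∀ i j, i ≤ n → j ≤ n → ∀ x, x ∈ F i → x ∈ F j → i = j := by
    intro i j hi hj x hxi hxj
    by_contra h
    have hd := hdisj i j hi hj h
    have : x ∈ F i ∩ F j := ⟨hxi, hxj⟩
    rw [hd] at this
    exact this
  constructor
  · constructor
    · refine ⟨hne 0 (Nat.zero_le n), ?_, ?_⟩
      · rintro a i hi ⟨c, hD, hac⟩
        obtain ⟨k, hk, hak⟩ := hgrade a
        obtain ⟨l, hl, hcl⟩ := hgrade c
        obtain ⟨hkl, hmem⟩ := hadd k l hk hl a hak c hcl hD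
        rw [hac] at hmem
        have h0 : k + l = 0 := huniq _ _ hkl (Nat.zero_le n) i hmem hi
        have hk0 : k = 0 := by omega
        rwa [hk0] at hak
      · intro i j hi hj hD
        exact (hadd 0 0 (Nat.zero_le n) (Nat.zero_le n) i hi j hj hD).2
    · intro a i j hai hja heq
      obtain ⟨k, hk, hak⟩ := hgrade a
      obtain ⟨p, hp, hip⟩ := hgrade i
      obtain ⟨q, hq, hjq⟩ := hgrade j
      obtain ⟨hkp, hm1⟩ := hadd k p hk hp a hak i hip hai
      obtain ⟨hqk, hm2⟩ := hadd q k hq hk j hjq a hak hja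
      rw [heq] at hm1
      have hpq : k + p = q + k := huniq _ _ hkp hqk _ hm1 hm2
      have hpq' : p = q := by omega
      constructor
      · intro h0
        have hp0 : p = 0 := huniq p 0 hp (Nat.zero_le n) i hip h0
        have hq0 : q = 0 := by omega
        rwa [hq0] at hjq
      · intro h0
        have hq0 : q = 0 := huniq q 0 hq (Nat.zero_le n) j hjq h0
        have hp0 : p = 0 := by omega
        rwa [hp0] at hip
  · intro s _ hval
    ext x
    simp only [Set.mem_setOf_eq]
    constructor
    · intro hx0
      have := hval 0 (Nat.zero_le n) x hx0
      simpa using this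
    · intro hs0
      obtain ⟨i, hi, hxi⟩ := hgrade x
      have hsx := hval i hi x hxi
      rw [hs0] at hsx
      have hn0 : (n : ℝ) ≠ 0 := by positivity
      have : (i : ℝ) = 0 := by
        field_simp at hsx
        simpa using hsx.symm
      have hi0 : i = 0 := by exact_mod_cast this
      rwa [hi0] at hxi
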